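/- For stars S_n and S_m, the b-chromatic number of the line graph of S_n □ S_m equals m + n. -/

import Mathlib

open SimpleGraph

/-- The star graph with a central vertex `0` and `n` leaves. -/
def starGraph (n : ℕ) : SimpleGraph (Fin (n+1)) where
  Adj u v := u ≠ v ∧ (u = 0 ∨ v = 0)
  symm := by
    constructor
    intro u v h
    exact ⟨h.1.symm, h.2.symm⟩
  loopless := by
    constructor
    intro u h
    exact h.1 rfl

/-- A proper coloring with `k` colors which is a b-coloring: every color class
contains a vertex adjacent to at least one vertex of every other color class. -/
def IsBColoring {V : Type*} (G : SimpleGraph V) (k : ℕ) (c : V → Fin k) : Prop :=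
  (∀ u v, G.Adj u v → c u ≠ c v) ∧
    ∀ i : Fin k, ∃ v, c v = i ∧ ∀ j : Fin k, j ≠ i → ∃ u, G.Adj v u ∧ c u = j

/-- `G` admits a b-coloring with `k` colors. -/
def HasBColoring {V : Type*} (G : SimpleGraph V) (k : ℕ) : Prop :=
  ∃ c : V → Fin k, IsBColoring G k c

/-- The set of `k` such that `G` has a b-coloring with `k` colors.  The
b-chromatic number of `G` is the greatest element of this set. -/
def bChromaticSet {V : Type*} (G : SimpleGraph V) : Set ℕ :=
  {k | HasBColoring G k}

/-- The set of `i` such that `G` has at least `i` vertices of degree at least `i - 1`.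
The m-degree of `G` is the greatest element of this set. -/
def mDegreeSet {V : Type*} (G : SimpleGraph V) : Set ℕ :=
  {i | ∃ S : Set V, S.Finite ∧ S.ncard = i ∧ ∀ v ∈ S, i - 1 ≤ (G.neighborSet v).ncard}

/-- The line graph of `G`: vertices are the edges of `G`, two being adjacent iff
they are distinct and share an endpoint. -/
def lineGraphOf {V : Type*} (G : SimpleGraph V) : SimpleGraph G.edgeSet where
  Adj e f := e ≠ f ∧ ∃ v, v ∈ (e : Sym2 V) ∧ v ∈ (f : Sym2 V)
  symm := by
    constructor
    rintro e f ⟨hne, v, hv1, hv2⟩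
    exact ⟨hne.symm, v, hv2, hv1⟩
  loopless := by
    constructor
    rintro e ⟨hne, -⟩
    exact hne rfl

/-- The total graph of `G`: vertices are `V(G) ⊕ E(G)`; adjacency is vertex
adjacency, vertex-edge incidence, or edge adjacency. -/
def totalGraph {V : Type*} (G : SimpleGraph V) : SimpleGraph (V ⊕ G.edgeSet) where
  Adj x y :=
    match x, y with
    | .inl u, .inl v => G.Adj u v
    | .inl u, .inr e => u ∈ (e : Sym2 V)
    | .inr e, .inl u => u ∈ (e : Sym2 V)
    | .inr e, .inr f => e ≠ f ∧ ∃ v, v ∈ (e : Sym2 V) ∧ v ∈ (f : Sym2 V)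
  symm := by
    constructor
    rintro (u | e) (v | f) h
    · exact h.symm
    · exact h
    · exact h
    · exact ⟨h.1.symm, h.2.choose, h.2.choose_spec.2, h.2.choose_spec.1⟩
  loopless := by
    constructor
    rintro (u | e) h
    · exact G.loopless.irrefl u h
    · exact h.1 rfl

/-- The `p`-th power of `G`: same vertices, `u ~ v` iff `0 < d(u,v) ≤ p`. -/
def graphPower {V : Type*} (G : SimpleGraph V) (p : ℕ) : SimpleGraph V where
  Adj u v := 0 < G.dist u v ∧ G.dist u v ≤ p
  symm := by
    constructor
    intro u v h
    rwa [SimpleGraph.dist_comm]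
  loopless := by
    constructor
    intro u h
    simp [SimpleGraph.dist_self] at h

namespace StarBox

abbrev V (n m : ℕ) := Fin (n+1) × Fin (m+1)
abbrev G (n m : ℕ) : SimpleGraph (V n m) := (_root_.starGraph n).boxProd (_root_.starGraph m)
abbrev E (n m : ℕ) := (G n m).edgeSet
abbrev L (n m : ℕ) := lineGraphOf (G n m)

variable {n m : ℕ}

lemma exists_pair (z : Sym2 (V n m)) : ∃ a b, z = s(a,b) := Sym2.ind (fun a b => ⟨a,b,rfl⟩) z

lemma lineAdj_iff (e f : E n m) :
    (L n m).Adj e f ↔ e ≠ f ∧ ∃ x, x ∈ e.val ∧ x ∈ f.val := Iff.rfl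

lemma adj_iff (a b : V n m) : (G n m).Adj a b ↔
    ((a.1 ≠ b.1 ∧ (a.1 = 0 ∨ b.1 = 0)) ∧ a.2 = b.2) ∨
      ((a.2 ≠ b.2 ∧ (a.2 = 0 ∨ b.2 = 0)) ∧ a.1 = b.1) := by
  exact boxProd_adj

lemma adj_cases {a b : V n m} (h : (G n m).Adj a b) :
    (a.2 = b.2 ∧ ((a.1 = 0 ∧ b.1 ≠ 0) ∨ (b.1 = 0 ∧ a.1 ≠ 0))) ∨
      (a.1 = b.1 ∧ ((a.2 = 0 ∧ b.2 ≠ 0) ∨ (b.2 = 0 ∧ a.2 ≠ 0))) := by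
  rw [adj_iff] at h
  rcases h with ⟨⟨hne, h0⟩, he⟩ | ⟨⟨hne, h0⟩, he⟩
  · left; refine ⟨he, ?_⟩
    rcases h0 with h0 | h0
    · left; exact ⟨h0, by rw [h0] at hne; exact fun hb => hne hb.symm⟩
    · right; exact ⟨h0, by rw [h0] at hne; exact hne⟩
  · right; refine ⟨he, ?_⟩
    rcases h0 with h0 | h0
    · left; exact ⟨h0, by rw [h0] at hne; exact fun hb => hne hb.symm⟩
    · right; exact ⟨h0, by rw [h0] at hne; exact hne⟩

lemma mkAdjH {u : Fin (n+1)} (hu : u ≠ 0) (v : Fin (m+1)) :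
    (G n m).Adj (0, v) (u, v) := by
  rw [adj_iff]; exact Or.inl ⟨⟨fun h => hu h.symm, Or.inl rfl⟩, rfl⟩

lemma mkAdjV (u : Fin (n+1)) {v : Fin (m+1)} (hv : v ≠ 0) :
    (G n m).Adj (u, 0) (u, v) := by
  rw [adj_iff]; exact Or.inr ⟨⟨fun h => hv h.symm, Or.inl rfl⟩, rfl⟩

lemma nbr_of_origin {z : V n m} (h : (G n m).Adj (0, 0) z) :
    (∃ u', u' ≠ 0 ∧ z = (u', 0)) ∨ ∃ v', v' ≠ 0 ∧ z = (0, v') := by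
  obtain ⟨z1, z2⟩ := z
  rcases adj_cases h with ⟨he, ⟨h1, h2⟩ | ⟨h1, h2⟩⟩ | ⟨he, ⟨h1, h2⟩ | ⟨h1, h2⟩⟩ <;>
    dsimp only at he h1 h2
  · exact Or.inl ⟨z1, h2, Prod.ext rfl he.symm⟩
  · exact absurd rfl h2
  · exact Or.inr ⟨z2, h2, Prod.ext he.symm rfl⟩
  · exact absurd rfl h2

lemma nbr_of_col0 {v : Fin (m+1)} (hv : v ≠ 0) {z : V n m}
    (h : (G n m).Adj (0, v) z) :
    z = ((0,0) : V n m) ∨ ∃ u', u' ≠ 0 ∧ z = (u', v) := by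
  obtain ⟨z1, z2⟩ := z
  rcases adj_cases h with ⟨he, ⟨h1, h2⟩ | ⟨h1, h2⟩⟩ | ⟨he, ⟨h1, h2⟩ | ⟨h1, h2⟩⟩ <;>
    dsimp only at he h1 h2
  · exact Or.inr ⟨z1, h2, Prod.ext rfl he.symm⟩
  · exact absurd rfl h2
  · exact absurd h1 hv
  · exact Or.inl (Prod.ext he.symm h1)

lemma nbr_of_row0 {u : Fin (n+1)} (hu : u ≠ 0) {z : V n m}
    (h : (G n m).Adj (u, 0) z) :
    z = ((0,0) : V n m) ∨ ∃ v', v' ≠ 0 ∧ z = (u, v') := by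
  obtain ⟨z1, z2⟩ := z
  rcases adj_cases h with ⟨he, ⟨h1, h2⟩ | ⟨h1, h2⟩⟩ | ⟨he, ⟨h1, h2⟩ | ⟨h1, h2⟩⟩ <;>
    dsimp only at he h1 h2
  · exact absurd h1 hu
  · exact Or.inl (Prod.ext h1 he.symm)
  · exact Or.inr ⟨z2, h2, Prod.ext he.symm rfl⟩
  · exact absurd rfl h2

lemma nbr_of_mid {u : Fin (n+1)} {v : Fin (m+1)} (hu : u ≠ 0) (hv : v ≠ 0)
    {z : V n m} (h : (G n m).Adj (u, v) z) :
    z = (0, v) ∨ z = (u, 0) := by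
  obtain ⟨z1, z2⟩ := z
  rcases adj_cases h with ⟨he, ⟨h1, h2⟩ | ⟨h1, h2⟩⟩ | ⟨he, ⟨h1, h2⟩ | ⟨h1, h2⟩⟩ <;>
    dsimp only at he h1 h2
  · exact absurd h1 hu
  · exact Or.inl (Prod.ext h1 he.symm)
  · exact absurd h1 hv
  · exact Or.inr (Prod.ext he.symm h1)

lemma fne {k : ℕ} {a b : Fin k} (h : a ≠ b) : a.val ≠ b.val := fun hh => h (Fin.ext hh)

lemma fne0 {k : ℕ} {a : Fin (k+1)} (h : a ≠ 0) : a.val ≠ 0 := fun hh => h (Fin.ext hh)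


def colN : Sym2 (V n m) → ℕ := Sym2.lift ⟨fun a b =>
  if a.1 = 0 ∧ b.1 ≠ 0 then m + (b.1.val - 1)
  else if b.1 = 0 ∧ a.1 ≠ 0 then m + (a.1.val - 1)
  else if a.2 = 0 ∧ b.2 ≠ 0 then b.2.val - 1
  else if b.2 = 0 ∧ a.2 ≠ 0 then a.2.val - 1
  else 0, by
    intro a b; dsimp only
    split_ifs <;> first | rfl | tauto⟩

lemma colN_horiz {u : Fin (n+1)} (hu : u ≠ 0) (v : Fin (m+1)) :
    colN (s(((0 : Fin (n+1)), v), (u, v)) : Sym2 (V n m)) = m + (u.val - 1) := by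
  rw [colN, Sym2.lift_mk]
  dsimp only
  rw [if_pos ⟨rfl, hu⟩]

lemma colN_vert (u : Fin (n+1)) {v : Fin (m+1)} (hv : v ≠ 0) :
    colN (s((u, (0 : Fin (m+1))), (u, v)) : Sym2 (V n m)) = v.val - 1 := by
  rw [colN, Sym2.lift_mk]
  dsimp only
  rw [if_neg (fun h => h.2 h.1), if_neg (fun h => h.2 h.1), if_pos ⟨rfl, hv⟩]

lemma edge_rep (e : E n m) :
    (∃ u v, u ≠ 0 ∧ e.val = s(((0 : Fin (n+1)), v), (u, v))) ∨
      (∃ u v, v ≠ 0 ∧ e.val = s((u, (0 : Fin (m+1))), (u, v))) := by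
  obtain ⟨a, b, hab⟩ := exists_pair e.val
  have hadj : (G n m).Adj a b := (G n m).mem_edgeSet.mp (hab ▸ e.property)
  obtain ⟨a1, a2⟩ := a; obtain ⟨b1, b2⟩ := b
  rcases adj_cases hadj with ⟨he, ⟨h1, h2⟩ | ⟨h1, h2⟩⟩ | ⟨he, ⟨h1, h2⟩ | ⟨h1, h2⟩⟩ <;>
    dsimp only at he h1 h2
  · exact Or.inl ⟨b1, b2, h2, by rw [hab, h1, he]⟩
  · exact Or.inl ⟨a1, a2, h2, by rw [hab, h1, he, Sym2.eq_swap]⟩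
  · exact Or.inr ⟨a1, b2, h2, by rw [hab, h1, he]⟩
  · exact Or.inr ⟨a1, a2, h2, by rw [hab]; subst he; subst h1; exact Sym2.eq_swap⟩

lemma colN_lt (e : E n m) : colN e.val < m + n := by
  rcases edge_rep e with ⟨u, v, hu, he⟩ | ⟨u, v, hv, he⟩
  · rw [he, colN_horiz hu]
    have h1 := fne0 hu
    have h2 := u.isLt
    omega
  · rw [he, colN_vert u hv]
    have h1 := fne0 hv
    have h2 := v.isLt
    omega

def col (e : E n m) : Fin (m + n) := ⟨colN e.val, colN_lt e⟩


lemma col_proper {e f : E n m} (hadj : (L n m).Adj e f) : col e ≠ col f := by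
  intro heq
  have hN : colN e.val = colN f.val := congrArg Fin.val heq
  obtain ⟨hne, x, hxe, hxf⟩ := hadj
  rcases edge_rep e with ⟨u, v, hu, he⟩ | ⟨u, v, hv, he⟩ <;>
    rcases edge_rep f with ⟨u', v', hu', hf⟩ | ⟨u', v', hv', hf⟩
  · -- horizontal / horizontal
    rw [he, colN_horiz hu, hf, colN_horiz hu'] at hN
    have h1 := fne0 hu; have h2 := fne0 hu'
    have huu : u = u' := Fin.ext (by omega)
    subst huu
    have hvv : v ≠ v' := by
      intro hvv; subst hvv; exact hne (Subtype.ext (he.trans hf.symm))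
    rw [he] at hxe; rw [hf] at hxf
    rw [Sym2.mem_iff] at hxe
    rcases hxe with rfl | rfl <;>
      (rw [Sym2.mem_iff] at hxf; simp only [Prod.mk.injEq] at hxf;
       rcases hxf with ⟨ha, hb⟩ | ⟨ha, hb⟩)
    · exact hvv hb
    · exact hu' ha.symm
    · exact hu ha
    · exact hvv hb
  · -- horizontal / vertical
    rw [he, colN_horiz hu, hf, colN_vert u' hv'] at hN
    have h1 := fne0 hu; have h2 := fne0 hv'
    have := v'.isLt
    omega
  · rw [he, colN_vert u hv, hf, colN_horiz hu'] at hN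
    have h1 := fne0 hv; have h2 := fne0 hu'
    have := v.isLt
    omega
  · -- vertical / vertical
    rw [he, colN_vert u hv, hf, colN_vert u' hv'] at hN
    have h1 := fne0 hv; have h2 := fne0 hv'
    have hvv : v = v' := Fin.ext (by omega)
    subst hvv
    have huu : u ≠ u' := by
      intro huu; subst huu; exact hne (Subtype.ext (he.trans hf.symm))
    rw [he] at hxe; rw [hf] at hxf
    rw [Sym2.mem_iff] at hxe
    rcases hxe with rfl | rfl <;>
      (rw [Sym2.mem_iff] at hxf; simp only [Prod.mk.injEq] at hxf;
       rcases hxf with ⟨ha, hb⟩ | ⟨ha, hb⟩)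
    · exact huu ha
    · exact hv hb.symm
    · exact hv hb
    · exact huu ha

def E0 (i : Fin (m + n)) : E n m :=
  if h : i.val < m then
    ⟨s(((0 : Fin (n+1)), (0 : Fin (m+1))), ((0 : Fin (n+1)), ⟨i.val + 1, by omega⟩)),
      (G n m).mem_edgeSet.mpr (mkAdjV 0 (by intro hh; exact absurd (congrArg Fin.val hh) (by simp)))⟩
  else
    ⟨s(((0 : Fin (n+1)), (0 : Fin (m+1))), (⟨i.val - m + 1, by have := i.isLt; omega⟩, (0 : Fin (m+1)))),
      (G n m).mem_edgeSet.mpr (mkAdjH (by intro hh; exact absurd (congrArg Fin.val hh) (by simp)) 0)⟩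

lemma origin_mem_E0 (i : Fin (m + n)) : ((0,0) : V n m) ∈ (E0 i).val := by
  rw [E0]
  split_ifs <;> exact Sym2.mem_iff.mpr (Or.inl rfl)

lemma col_E0 (i : Fin (m + n)) : col (E0 i) = i := by
  apply Fin.ext
  show colN (E0 i).val = i.val
  rw [E0]
  split_ifs with h
  · rw [colN_vert _ (by intro hh; exact absurd (congrArg Fin.val hh) (by simp))]
    simp
  · rw [colN_horiz (by intro hh; exact absurd (congrArg Fin.val hh) (by simp)) _]
    have := i.isLt
    simp only []
    omega

lemma E0_inj : Function.Injective (E0 : Fin (m+n) → E n m) := by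
  intro i j h
  rw [← col_E0 i, ← col_E0 j, h]

lemma eq_E0_of_origin_mem {e : E n m} (he : ((0,0) : V n m) ∈ e.val) :
    ∃ i, e = E0 i := by
  obtain ⟨z, hz⟩ := Sym2.mem_iff_exists.mp he
  have hadj : (G n m).Adj (0,0) z := (G n m).mem_edgeSet.mp (hz ▸ e.property)
  rcases nbr_of_origin hadj with ⟨u', hu', rfl⟩ | ⟨v', hv', rfl⟩
  · have h1 := fne0 hu'
    have h2 := u'.isLt
    refine ⟨⟨m + u'.val - 1, by omega⟩, Subtype.ext ?_⟩
    rw [hz, E0]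
    rw [dif_neg (by simp; omega)]
    congr 2
    refine Fin.ext ?_
    simp
    omega
  · have h1 := fne0 hv'
    have h2 := v'.isLt
    refine ⟨⟨v'.val - 1, by omega⟩, Subtype.ext ?_⟩
    rw [hz, E0]
    rw [dif_pos (by simp; omega)]
    congr 2
    refine Fin.ext ?_
    simp
    omega

lemma E0_adj {i j : Fin (m+n)} (hij : i ≠ j) : (L n m).Adj (E0 i) (E0 j) :=
  ⟨fun h => hij (E0_inj h), ⟨(0,0), origin_mem_E0 i, origin_mem_E0 j⟩⟩

lemma membership : HasBColoring (L n m) (m + n) := by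
  refine ⟨col, fun e f hadj => col_proper hadj, fun i => ⟨E0 i, col_E0 i, fun j hj => ⟨E0 j, E0_adj (fun h => hj (h ▸ rfl)), col_E0 j⟩⟩⟩


-- swap machinery
lemma adj_swap {a b : V n m} (h : (G n m).Adj a b) : (G m n).Adj a.swap b.swap := by
  rw [adj_iff] at h ⊢
  simp only [Prod.fst_swap, Prod.snd_swap]
  tauto

def eswap (e : E n m) : E m n :=
  ⟨Sym2.map Prod.swap e.val, by
    obtain ⟨a, b, hab⟩ := exists_pair e.val
    rw [hab, Sym2.map_pair_eq]
    exact (G m n).mem_edgeSet.mpr (adj_swap ((G n m).mem_edgeSet.mp (hab ▸ e.property)))⟩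

lemma eswap_val (e : E n m) : (eswap e).val = Sym2.map Prod.swap e.val := rfl

lemma eswap_eswap (e : E n m) : eswap (eswap e) = e := by
  apply Subtype.ext
  rw [eswap_val, eswap_val, Sym2.map_map]
  have h : (Prod.swap ∘ Prod.swap : V n m → V n m) = id := funext (fun x => Prod.swap_swap x)
  rw [h, Sym2.map_id]; rfl

lemma eswap_adj {e f : E n m} (h : (L n m).Adj e f) : (L m n).Adj (eswap e) (eswap f) := by
  obtain ⟨hne, x, hxe, hxf⟩ := h
  refine ⟨fun hh => hne ?_, ⟨x.swap, ?_, ?_⟩⟩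
  · have := congrArg eswap hh
    rwa [eswap_eswap, eswap_eswap] at this
  · rw [eswap_val]; exact Sym2.mem_map.mpr ⟨x, hxe, rfl⟩
  · rw [eswap_val]; exact Sym2.mem_map.mpr ⟨x, hxf, rfl⟩

-- neighbor classification of a horizontal edge avoiding the origin
lemma nbrH {u : Fin (n+1)} {v : Fin (m+1)} (hu : u ≠ 0) (hv : v ≠ 0)
    {e₀ f : E n m} (he₀ : e₀.val = s(((0 : Fin (n+1)), v), (u, v)))
    (hadj : (L n m).Adj e₀ f) :
    f.val = s(((0,0) : V n m), ((0 : Fin (n+1)), v)) ∨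
      f.val = s(((u, 0) : V n m), (u, v)) ∨
      ∃ u', u' ≠ 0 ∧ u' ≠ u ∧ f.val = s(((0 : Fin (n+1)), v), (u', v)) := by
  obtain ⟨hne, x, hxe, hxf⟩ := hadj
  rw [he₀, Sym2.mem_iff] at hxe
  obtain ⟨z, hz⟩ := Sym2.mem_iff_exists.mp hxf
  rcases hxe with rfl | rfl
  · have hadjz : (G n m).Adj (0, v) z := (G n m).mem_edgeSet.mp (hz ▸ f.property)
    rcases nbr_of_col0 hv hadjz with rfl | ⟨u', hu', rfl⟩
    · left; rw [hz, Sym2.eq_swap]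
    · by_cases huu : u' = u
      · subst huu
        exact absurd (Subtype.ext (he₀.trans hz.symm)) hne
      · exact Or.inr (Or.inr ⟨u', hu', huu, hz⟩)
  · have hadjz : (G n m).Adj (u, v) z := (G n m).mem_edgeSet.mp (hz ▸ f.property)
    rcases nbr_of_mid hu hv hadjz with rfl | rfl
    · exact absurd (Subtype.ext (by rw [he₀, hz]; exact Sym2.eq_swap)) hne
    · right; left; rw [hz, Sym2.eq_swap]

def sumFst : Sym2 (V n m) → ℕ :=
  Sym2.lift ⟨fun a b => a.1.val + b.1.val, fun a b => Nat.add_comm _ _⟩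

def psi (u : Fin (n+1)) (f : E n m) : ℕ :=
  if ((0,0) : V n m) ∈ f.val then n
  else if ((u, (0 : Fin (m+1))) : V n m) ∈ f.val then n + 1
  else sumFst f.val - 1

lemma psi_a {u : Fin (n+1)} {v : Fin (m+1)} {f : E n m}
    (hf : f.val = s(((0,0) : V n m), ((0 : Fin (n+1)), v))) : psi u f = n := by
  rw [psi, if_pos (by rw [hf]; exact Sym2.mem_iff.mpr (Or.inl rfl))]

lemma psi_b {u : Fin (n+1)} {v : Fin (m+1)} (hu : u ≠ 0) (hv : v ≠ 0) {f : E n m}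
    (hf : f.val = s(((u, (0 : Fin (m+1))) : V n m), (u, v))) : psi u f = n + 1 := by
  have h1 : ¬ (((0,0) : V n m) ∈ f.val) := by
    rw [hf, Sym2.mem_iff]
    rintro (h | h) <;> (rw [Prod.mk.injEq] at h; exact hu h.1.symm)
  rw [psi, if_neg h1, if_pos (by rw [hf]; exact Sym2.mem_iff.mpr (Or.inl rfl))]

lemma psi_c {u u' : Fin (n+1)} {v : Fin (m+1)} (hu : u ≠ 0) (hu' : u' ≠ 0) (hv : v ≠ 0)
    {f : E n m} (hf : f.val = s(((0 : Fin (n+1)), v), (u', v))) :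
    psi u f = u'.val - 1 := by
  have h1 : ¬ (((0,0) : V n m) ∈ f.val) := by
    rw [hf, Sym2.mem_iff]
    rintro (h | h) <;> rw [Prod.mk.injEq] at h
    · exact hv h.2.symm
    · exact hu' h.1.symm
  have h2 : ¬ (((u, (0 : Fin (m+1))) : V n m) ∈ f.val) := by
    rw [hf, Sym2.mem_iff]
    rintro (h | h) <;> rw [Prod.mk.injEq] at h
    · exact hu h.1
    · exact hv h.2.symm
  rw [psi, if_neg h1, if_neg h2, hf, sumFst, Sym2.lift_mk]
  simp

def hedgeE (w : Fin (n+1)) (hw : w ≠ 0) (t : Fin (m+1)) : E n m :=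
  ⟨s(((0 : Fin (n+1)), t), (w, t)), (G n m).mem_edgeSet.mpr (mkAdjH hw t)⟩

def vedgeE (w : Fin (n+1)) {t : Fin (m+1)} (ht : t ≠ 0) : E n m :=
  ⟨s((w, (0 : Fin (m+1))), (w, t)), (G n m).mem_edgeSet.mpr (mkAdjV w ht)⟩


def E1 (n : ℕ) (w : Fin (n+1)) : E n 1 :=
  if h : w = 0 then vedgeE (0 : Fin (n+1)) (t := (1 : Fin 2)) (by decide)
  else hedgeE w h 1

lemma E1_val_zero (n : ℕ) :
    (E1 n 0).val = s(((0,0) : V n 1), ((0 : Fin (n+1)), (1 : Fin 2))) := by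
  rw [E1, dif_pos rfl]; rfl

lemma E1_val_ne (n : ℕ) {w : Fin (n+1)} (h : w ≠ 0) :
    (E1 n w).val = s(((0 : Fin (n+1)), (1 : Fin 2)), (w, 1)) := by
  rw [E1, dif_neg h]; rfl

lemma keyH (n m k : ℕ) (c : E n m → Fin k)
    (hc1 : ∀ e f, (L n m).Adj e f → c e ≠ c f)
    (hc2 : ∀ j : Fin k, ∃ e, c e = j ∧ ∀ j' : Fin k, j' ≠ j → ∃ f, (L n m).Adj e f ∧ c f = j')
    (i₀ : Fin k) (hi₀ : ∀ e : E n m, ((0,0) : V n m) ∈ e.val → c e ≠ i₀)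
    (hk : n + m + 1 ≤ k)
    (u : Fin (n+1)) (v : Fin (m+1)) (hu : u ≠ 0) (hv : v ≠ 0)
    (e₀ : E n m) (he₀ : e₀.val = s(((0 : Fin (n+1)), v), (u, v)))
    (hc₀ : c e₀ = i₀)
    (hb₀ : ∀ j' : Fin k, j' ≠ i₀ → ∃ f, (L n m).Adj e₀ f ∧ c f = j') : False := by
  have hu1 := fne0 hu
  have hun := u.isLt
  have hv1 := fne0 hv
  have hvm := v.isLt
  -- degree bound : k - 1 ≤ n + 1
  have degb : k - 1 ≤ n + 1 := by
    choose F hF1 hF2 using hb₀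
    have key : (Finset.univ.erase i₀).card ≤ ((Finset.range (n+2)).erase (u.val - 1)).card := by
      apply Finset.card_le_card_of_injOn (fun j => if h : j = i₀ then 0 else psi u (F j h))
      · intro j hj
        have hjne : j ≠ i₀ := Finset.ne_of_mem_erase hj
        dsimp only; rw [Finset.mem_coe, dif_neg hjne]
        rcases nbrH hu hv he₀ (hF1 j hjne) with hf | hf | ⟨u', hu', huu, hf⟩
        · rw [psi_a hf]
          exact Finset.mem_erase.mpr ⟨by omega, Finset.mem_range.mpr (by omega)⟩
        · rw [psi_b hu hv hf]
          exact Finset.mem_erase.mpr ⟨by omega, Finset.mem_range.mpr (by omega)⟩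
        · rw [psi_c hu hu' hv hf]
          have h3 := fne0 hu'
          have h4 := u'.isLt
          have h5 : u'.val ≠ u.val := fne huu
          exact Finset.mem_erase.mpr ⟨by omega, Finset.mem_range.mpr (by omega)⟩
      · intro j hj j' hj' heq
        have hjne : j ≠ i₀ := Finset.ne_of_mem_erase hj
        have hjne' : j' ≠ i₀ := Finset.ne_of_mem_erase hj'
        dsimp only at heq
        rw [dif_neg hjne, dif_neg hjne'] at heq
        have hval : (F j hjne).val = (F j' hjne').val := by
          rcases nbrH hu hv he₀ (hF1 j hjne) with hf | hf | ⟨a, ha, haa, hf⟩ <;>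
            rcases nbrH hu hv he₀ (hF1 j' hjne') with hg | hg | ⟨b, hb, hbb, hg⟩
          · rw [hf, hg]
          · rw [psi_a hf, psi_b hu hv hg] at heq; omega
          · rw [psi_a hf, psi_c hu hb hv hg] at heq
            have := fne0 hb; have := b.isLt; omega
          · rw [psi_b hu hv hf, psi_a hg] at heq; omega
          · rw [hf, hg]
          · rw [psi_b hu hv hf, psi_c hu hb hv hg] at heq
            have := fne0 hb; have := b.isLt; omega
          · rw [psi_c hu ha hv hf, psi_a hg] at heq
            have := fne0 ha; have := a.isLt; omega
          · rw [psi_c hu ha hv hf, psi_b hu hv hg] at heq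
            have := fne0 ha; have := a.isLt; omega
          · rw [psi_c hu ha hv hf, psi_c hu hb hv hg] at heq
            have h1 := fne0 ha; have h2 := fne0 hb
            have hab : a = b := Fin.ext (by omega)
            rw [hf, hg, hab]
        have hFF : F j hjne = F j' hjne' := Subtype.ext hval
        rw [← hF2 j hjne, ← hF2 j' hjne', hFF]
    rw [Finset.card_erase_of_mem (Finset.mem_univ i₀), Finset.card_univ, Fintype.card_fin,
      Finset.card_erase_of_mem (Finset.mem_range.mpr (by omega)), Finset.card_range] at key
    omega
  have hm : m = 1 := by omega
  subst hm
  have hk2 : k = n + 2 := by omega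
  subst hk2
  have hv2 : v = 1 := by apply Fin.ext; rw [Fin.val_one]; omega
  subst hv2
  by_cases hn1 : n = 1
  · -- small case n = m = 1
    subst hn1
    have hu2 : u = 1 := by apply Fin.ext; rw [Fin.val_one]; omega
    subst hu2
    have hj : c (hedgeE 1 (by decide) 0) ≠ i₀ := hi₀ _ (Sym2.mem_iff.mpr (Or.inl rfl))
    obtain ⟨f, hadjf, hcf⟩ := hb₀ _ hj
    rcases nbrH hu hv he₀ hadjf with hf | hf | ⟨u', hu', huu, hf⟩
    · have hadj2 : (L 1 1).Adj (hedgeE 1 (by decide) 0) f := by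
        refine ⟨fun hh => ?_, ⟨((0,0) : V 1 1), Sym2.mem_iff.mpr (Or.inl rfl),
          by rw [hf]; exact Sym2.mem_iff.mpr (Or.inl rfl)⟩⟩
        rw [Subtype.ext_iff, hf] at hh
        exact absurd hh (by decide)
      exact hc1 _ _ hadj2 hcf.symm
    · have hadj2 : (L 1 1).Adj (hedgeE 1 (by decide) 0) f := by
        refine ⟨fun hh => ?_, ⟨(((1 : Fin 2), (0 : Fin 2)) : V 1 1), Sym2.mem_iff.mpr (Or.inr rfl),
          by rw [hf]; exact Sym2.mem_iff.mpr (Or.inl rfl)⟩⟩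
        rw [Subtype.ext_iff, hf] at hh
        exact absurd hh (by decide)
      exact hc1 _ _ hadj2 hcf.symm
    · have h3 := fne0 hu'
      have h4 := u'.isLt
      have h5 : u'.val ≠ (1 : Fin 2).val := fne huu
      rw [Fin.val_one] at h5
      omega
  · -- main case n ≥ 2
    have hn2 : 2 ≤ n := by omega
    obtain ⟨M', hM'⟩ : ∃ M' : Fin (n+2), ∀ f : E n 1,
        ((0 : Fin (n+1)), (1 : Fin 2)) ∈ f.val → c f ≠ M' := by
      have hnsurj : ¬ Function.Surjective (fun w : Fin (n+1) => c (E1 n w)) := by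
        intro hs
        have hcard := Fintype.card_le_of_surjective _ hs
        simp only [Fintype.card_fin] at hcard
        omega
      rw [Function.Surjective] at hnsurj
      push_neg at hnsurj
      obtain ⟨M', hM'⟩ := hnsurj
      refine ⟨M', fun f hf => ?_⟩
      obtain ⟨z, hz⟩ := Sym2.mem_iff_exists.mp hf
      have hadjz : (G n 1).Adj (0, 1) z := (G n 1).mem_edgeSet.mp (hz ▸ f.property)
      rcases nbr_of_col0 (by decide) hadjz with rfl | ⟨u', hu', rfl⟩
      · have hfe : f = E1 n 0 := Subtype.ext (by rw [hz, E1_val_zero]; exact Sym2.eq_swap)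
        rw [hfe]; exact hM' 0
      · have hfe : f = E1 n u' := Subtype.ext (by rw [hz, E1_val_ne n hu'])
        rw [hfe]; exact hM' u'
    have hM'i₀ : M' ≠ i₀ := by
      have h := hM' e₀ (by rw [he₀]; exact Sym2.mem_iff.mpr (Or.inl rfl))
      rw [hc₀] at h
      exact Ne.symm h
    choose B hB1 hB2 using hc2
    have K1 : ∀ (j : Fin (n+2)) (w : Fin (n+1)), w ≠ 0 →
        (B j).val = s(((0 : Fin (n+1)), (1 : Fin 2)), (w, 1)) →
        ∃ f : E n 1, f.val = s(((w, (0 : Fin 2)) : V n 1), (w, 1)) ∧ c f = M' := by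
      intro j w hw hBj
      have hjM : M' ≠ j := by
        have h := hM' (B j) (by rw [hBj]; exact Sym2.mem_iff.mpr (Or.inl rfl))
        rw [hB1 j] at h
        exact Ne.symm h
      obtain ⟨f, hadjf, hcf⟩ := hB2 j M' hjM
      rcases nbrH hw (by decide) hBj hadjf with hf | hf | ⟨u', hu', huu, hf⟩
      · exact absurd hcf (hM' f (by rw [hf]; exact Sym2.mem_iff.mpr (Or.inr rfl)))
      · exact ⟨f, hf, hcf⟩
      · exact absurd hcf (hM' f (by rw [hf]; exact Sym2.mem_iff.mpr (Or.inl rfl)))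
    have K2 : ∀ (j : Fin (n+2)) (w : Fin (n+1)), w ≠ 0 →
        (B j).val = s(((0,0) : V n 1), (w, (0 : Fin 2))) →
        ∃ f : E n 1, f.val = s(((w, (0 : Fin 2)) : V n 1), (w, 1)) ∧ c f = i₀ := by
      intro j w hw hBj
      have hji : i₀ ≠ j := by
        have h := hi₀ (B j) (by rw [hBj]; exact Sym2.mem_iff.mpr (Or.inl rfl))
        rw [hB1 j] at h
        exact Ne.symm h
      obtain ⟨f, hadjf, hcf⟩ := hB2 j i₀ hji
      obtain ⟨hne, x, hxe, hxf⟩ := hadjf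
      rw [hBj, Sym2.mem_iff] at hxe
      obtain ⟨z, hz⟩ := Sym2.mem_iff_exists.mp hxf
      rcases hxe with rfl | rfl
      · exact absurd hcf (hi₀ f hxf)
      · have hadjz : (G n 1).Adj (w, 0) z := (G n 1).mem_edgeSet.mp (hz ▸ f.property)
        rcases nbr_of_row0 hw hadjz with rfl | ⟨v', hv', rfl⟩
        · exact absurd hcf (hi₀ f (by rw [hz]; exact Sym2.mem_iff.mpr (Or.inr rfl)))
        · have hv'1 : v' = 1 := by
            apply Fin.ext; rw [Fin.val_one]
            have := v'.isLt; have := fne0 hv'; omega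
          subst hv'1
          exact ⟨f, hz, hcf⟩
    have K4 : ∀ (j : Fin (n+2)) (w : Fin (n+1)), w ≠ 0 →
        (B j).val ≠ s(((w, (0 : Fin 2)) : V n 1), (w, 1)) := by
      intro j w hw hBj
      have hclass : ∀ f, (L n 1).Adj (B j) f →
          f.val = s(((0,0) : V n 1), (w, (0 : Fin 2))) ∨
            f.val = s(((0 : Fin (n+1)), (1 : Fin 2)), (w, 1)) := by
        intro f hadjf
        obtain ⟨hne, x, hxe, hxf⟩ := hadjf
        rw [hBj, Sym2.mem_iff] at hxe
        obtain ⟨z, hz⟩ := Sym2.mem_iff_exists.mp hxf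
        rcases hxe with rfl | rfl
        · have hadjz : (G n 1).Adj (w, 0) z := (G n 1).mem_edgeSet.mp (hz ▸ f.property)
          rcases nbr_of_row0 hw hadjz with rfl | ⟨v', hv', rfl⟩
          · left; rw [hz, Sym2.eq_swap]
          · have hv'1 : v' = 1 := by
              apply Fin.ext; rw [Fin.val_one]
              have := v'.isLt; have := fne0 hv'; omega
            subst hv'1
            exact absurd (Subtype.ext (hz.trans hBj.symm)) (Ne.symm hne)
        · have hadjz : (G n 1).Adj (w, 1) z := (G n 1).mem_edgeSet.mp (hz ▸ f.property)
          rcases nbr_of_mid hw (by decide) hadjz with rfl | rfl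
          · right; rw [hz, Sym2.eq_swap]
          · exact absurd (Subtype.ext (by rw [hz, hBj]; exact Sym2.eq_swap)) (Ne.symm hne)
      choose F hF1 hF2 using hB2 j
      have key : (Finset.univ.erase j).card ≤
          ({s(((0,0) : V n 1), (w, (0 : Fin 2))),
            s(((0 : Fin (n+1)), (1 : Fin 2)), (w, 1))} : Finset (Sym2 (V n 1))).card := by
        apply Finset.card_le_card_of_injOn
          (fun j' => if h : j' = j then s(((0,0) : V n 1), (w, (0 : Fin 2))) else (F j' h).val)
        · intro j' hj'
          have hne : j' ≠ j := Finset.ne_of_mem_erase hj'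
          dsimp only; rw [Finset.mem_coe, dif_neg hne]
          rcases hclass _ (hF1 j' hne) with hf | hf <;> rw [hf]
          · exact Finset.mem_insert_self _ _
          · exact Finset.mem_insert.mpr (Or.inr (Finset.mem_singleton_self _))
        · intro a ha b hb heq
          have hnea : a ≠ j := Finset.ne_of_mem_erase ha
          have hneb : b ≠ j := Finset.ne_of_mem_erase hb
          dsimp only at heq
          rw [dif_neg hnea, dif_neg hneb] at heq
          have hFF : F a hnea = F b hneb := Subtype.ext heq
          rw [← hF2 a hnea, ← hF2 b hneb, hFF]
      rw [Finset.card_erase_of_mem (Finset.mem_univ j), Finset.card_univ, Fintype.card_fin] at key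
      have h2 : ({s(((0,0) : V n 1), (w, (0 : Fin 2))),
          s(((0 : Fin (n+1)), (1 : Fin 2)), (w, 1))} : Finset (Sym2 (V n 1))).card ≤ 2 :=
        (Finset.card_insert_le _ _).trans (by simp)
      omega
    have hforms : ∀ j : Fin (n+2),
        (∃ w : Fin (n+1), w ≠ 0 ∧ (B j).val = s(((0,0) : V n 1), (w, (0 : Fin 2)))) ∨
          (∃ w : Fin (n+1), w ≠ 0 ∧ (B j).val = s(((0 : Fin (n+1)), (1 : Fin 2)), (w, 1))) ∨
          (B j).val = s(((0,0) : V n 1), ((0 : Fin (n+1)), (1 : Fin 2))) := by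
      intro j
      rcases edge_rep (B j) with ⟨w, t, hw, hB⟩ | ⟨w, t, ht, hB⟩
      · by_cases ht0 : t = 0
        · subst ht0; exact Or.inl ⟨w, hw, hB⟩
        · have ht1 : t = 1 := by
            apply Fin.ext; rw [Fin.val_one]
            have := t.isLt; have := fne0 ht0; omega
          subst ht1
          exact Or.inr (Or.inl ⟨w, hw, hB⟩)
      · have ht1 : t = 1 := by
          apply Fin.ext; rw [Fin.val_one]
          have := t.isLt; have := fne0 ht; omega
        subst ht1
        by_cases hw0 : w = 0
        · subst hw0; exact Or.inr (Or.inr hB)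
        · exact absurd hB (K4 j w hw0)
    have key : (Finset.univ : Finset (Fin (n+2))).card ≤ (Finset.range (n+1)).card := by
      apply Finset.card_le_card_of_injOn (fun j => sumFst (B j).val)
      · intro j _
        refine Finset.mem_range.mpr ?_
        rcases hforms j with ⟨w, hw, hB⟩ | ⟨w, hw, hB⟩ | hB <;>
          (dsimp only; rw [hB, sumFst, Sym2.lift_mk]; dsimp only; simp only [Fin.val_zero])
        · have := w.isLt; omega
        · have := w.isLt; omega
        · omega
      · intro a _ b _ heq
        dsimp only at heq
        have goal : B a = B b → a = b := fun hab => by rw [← hB1 a, ← hB1 b, hab]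
        rcases hforms a with ⟨w, hw, hBa⟩ | ⟨w, hw, hBa⟩ | hBa <;>
          rcases hforms b with ⟨w', hw', hBb⟩ | ⟨w', hw', hBb⟩ | hBb <;>
          (rw [hBa, hBb, sumFst] at heq; simp only [Sym2.lift_mk, Fin.val_zero] at heq)
        · have hww : w = w' := Fin.ext (by omega)
          exact goal (Subtype.ext (by rw [hBa, hBb, hww]))
        · have hww : w = w' := Fin.ext (by omega)
          obtain ⟨f, hf, hfc⟩ := K2 a w hw hBa
          obtain ⟨g, hg, hgc⟩ := K1 b w' hw' hBb
          have hfg : f = g := Subtype.ext (by rw [hf, hg, hww])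
          rw [hfg] at hfc
          exact absurd (hfc.symm.trans hgc) (Ne.symm hM'i₀)
        · exact absurd heq (by have := fne0 hw; omega)
        · have hww : w = w' := Fin.ext (by omega)
          obtain ⟨f, hf, hfc⟩ := K1 a w hw hBa
          obtain ⟨g, hg, hgc⟩ := K2 b w' hw' hBb
          have hfg : f = g := Subtype.ext (by rw [hf, hg, hww])
          rw [hfg] at hfc
          exact absurd (hgc.symm.trans hfc) (Ne.symm hM'i₀)
        · have hww : w = w' := Fin.ext (by omega)
          exact goal (Subtype.ext (by rw [hBa, hBb, hww]))
        · exact absurd heq (by have := fne0 hw; omega)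
        · exact absurd heq (by have := fne0 hw'; omega)
        · exact absurd heq (by have := fne0 hw'; omega)
        · exact goal (Subtype.ext (hBa.trans hBb.symm))
    rw [Finset.card_univ, Fintype.card_fin, Finset.card_range] at key
    omega

lemma upper {k : ℕ} (h : HasBColoring (L n m) k) : k ≤ m + n := by
  by_contra hlt
  push_neg at hlt
  obtain ⟨c, hc1, hc2⟩ := h
  have hnsurj : ¬ Function.Surjective (fun i : Fin (m+n) => c (E0 i)) := by
    intro hs
    have hcard := Fintype.card_le_of_surjective _ hs
    simp only [Fintype.card_fin] at hcard
    omega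
  rw [Function.Surjective] at hnsurj
  push_neg at hnsurj
  obtain ⟨i₀, hi₀'⟩ := hnsurj
  have hi₀ : ∀ e : E n m, ((0,0) : V n m) ∈ e.val → c e ≠ i₀ := by
    intro e he
    obtain ⟨i, rfl⟩ := eq_E0_of_origin_mem he
    exact hi₀' i
  obtain ⟨e₀, hc₀, hb₀⟩ := hc2 i₀
  rcases edge_rep e₀ with ⟨u, v, hu, he₀⟩ | ⟨u, v, hv, he₀⟩
  · have hv : v ≠ 0 := by
      intro hv0
      subst hv0
      exact hi₀ e₀ (by rw [he₀]; exact Sym2.mem_iff.mpr (Or.inl rfl)) hc₀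
    exact keyH n m k c hc1 hc2 i₀ hi₀ (by omega) u v hu hv e₀ he₀ hc₀ hb₀
  · have hu : u ≠ 0 := by
      intro hu0
      subst hu0
      exact hi₀ e₀ (by rw [he₀]; exact Sym2.mem_iff.mpr (Or.inl rfl)) hc₀
    refine keyH m n k (fun e => c (eswap e)) (fun e f hadj => hc1 _ _ (eswap_adj hadj)) ?_ i₀ ?_
      (by omega) v u hv hu (eswap e₀) ?_ ?_ ?_
    · intro j
      obtain ⟨e, hce, hb⟩ := hc2 j
      refine ⟨eswap e, by simp only [eswap_eswap]; exact hce, ?_⟩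
      intro j' hj'
      obtain ⟨f, hadj, hcf⟩ := hb j' hj'
      exact ⟨eswap f, eswap_adj hadj, by simp only [eswap_eswap]; exact hcf⟩
    · intro e he
      apply hi₀ (eswap e)
      rw [eswap_val]
      exact Sym2.mem_map.mpr ⟨(0,0), he, rfl⟩
    · rw [eswap_val, he₀, Sym2.map_pair_eq]
      rfl
    · show c (eswap (eswap e₀)) = i₀
      rw [eswap_eswap]; exact hc₀
    · intro j' hj'
      obtain ⟨f, hadj, hcf⟩ := hb₀ j' hj'
      exact ⟨eswap f, eswap_adj hadj, by simp only [eswap_eswap]; exact hcf⟩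

end StarBox

theorem bChromatic_lineGraphOf_boxProd_star (n m : ℕ) :
    IsGreatest (bChromaticSet (lineGraphOf ((_root_.starGraph n).boxProd (_root_.starGraph m)))) (m + n) :=
  ⟨StarBox.membership, fun _ hk => StarBox.upper hk⟩
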